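/- Min-plus analogue of the superset algorithm: over the tropical semiring (min, +) on [0, ∞], define the sequence T_0 = t̃, T_{m+1} = min(T_m, T_m ⊗ p ⊗ T_m) where ⊗ is (min,+) matrix multiplication with fixed propagation-delay matrix p. Then T_m is nonincreasing, T_m ≤ t̃, and for m ≥ ⌈log₂ n⌉ with n = min(n_u, n_y), T_m = T_{m+1} and T_m satisfies the QI condition (T_m ⊗ p ⊗ T_m) ≥ T_m entrywise; moreover T_m is the entrywise largest matrix T ≤ t̃ satisfying T ⊗ p ⊗ T ≥ T. -/

import Mathlib

open ENNReal

/-- Tropical (min,+) matrix multiplication on [0,∞]. -/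
noncomputable def tmul {a b c : ℕ} (A : Matrix (Fin a) (Fin b) ℝ≥0∞) (B : Matrix (Fin b) (Fin c) ℝ≥0∞) :
    Matrix (Fin a) (Fin c) ℝ≥0∞ :=
  fun k l => ⨅ j, (A k j + B j l)

/-- Entrywise minimum of matrices. -/
def tmin {a b : ℕ} (A B : Matrix (Fin a) (Fin b) ℝ≥0∞) : Matrix (Fin a) (Fin b) ℝ≥0∞ :=
  fun i j => min (A i j) (B i j)

/-- The sequence T_0 = t̃, T_{m+1} = min(T_m, T_m ⊗ p ⊗ T_m). -/
noncomputable def Tseq {nu ny : ℕ} (tt : Matrix (Fin nu) (Fin ny) ℝ≥0∞)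
    (p : Matrix (Fin ny) (Fin nu) ℝ≥0∞) : ℕ → Matrix (Fin nu) (Fin ny) ℝ≥0∞
  | 0 => tt
  | m + 1 => tmin (Tseq tt p m) (tmul (tmul (Tseq tt p m) p) (Tseq tt p m))

noncomputable def tId (N : ℕ) : Matrix (Fin N) (Fin N) ℝ≥0∞ :=
  fun i j => if i = j then 0 else ⊤

noncomputable def tpow {N : ℕ} (A : Matrix (Fin N) (Fin N) ℝ≥0∞) : ℕ → Matrix (Fin N) (Fin N) ℝ≥0∞
  | 0 => tId N
  | k+1 => tmul A (tpow A k)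

lemma tId_tmul {N c : ℕ} (B : Matrix (Fin N) (Fin c) ℝ≥0∞) : tmul (tId N) B = B := by
  funext i l
  refine le_antisymm ((iInf_le _ i).trans (by simp [tId])) (le_iInf fun j => ?_)
  by_cases h : i = j
  · subst h; simp [tId]
  · simp [tId, h]

lemma tmul_tId {a N : ℕ} (B : Matrix (Fin a) (Fin N) ℝ≥0∞) : tmul B (tId N) = B := by
  funext i l
  refine le_antisymm ((iInf_le _ l).trans (by simp [tId])) (le_iInf fun j => ?_)
  by_cases h : j = l
  · subst h; simp [tId]
  · simp [tId, h]

lemma tmul_assoc {a b c d : ℕ} (A : Matrix (Fin a) (Fin b) ℝ≥0∞)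
    (B : Matrix (Fin b) (Fin c) ℝ≥0∞) (C : Matrix (Fin c) (Fin d) ℝ≥0∞) :
    tmul (tmul A B) C = tmul A (tmul B C) := by
  funext i l
  show ⨅ k, ((⨅ j, A i j + B j k) + C k l) = ⨅ j, (A i j + ⨅ k, (B j k + C k l))
  simp only [ENNReal.iInf_add, ENNReal.add_iInf]
  rw [iInf_comm]
  simp [add_assoc]
noncomputable def tcost {N : ℕ} (A : Matrix (Fin N) (Fin N) ℝ≥0∞) (v : ℕ → Fin N) (k : ℕ) : ℝ≥0∞ :=
  ∑ s ∈ Finset.range k, A (v s) (v (s+1))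

lemma tcost_succ' {N : ℕ} (A : Matrix (Fin N) (Fin N) ℝ≥0∞) (v : ℕ → Fin N) (k : ℕ) :
    tcost A v (k+1) = A (v 0) (v 1) + tcost A (fun s => v (s+1)) k := by
  simp only [tcost]
  rw [Finset.sum_range_succ', add_comm]

lemma tpow_le_tcost {N : ℕ} (A : Matrix (Fin N) (Fin N) ℝ≥0∞) :
    ∀ (k : ℕ) (v : ℕ → Fin N), tpow A k (v 0) (v k) ≤ tcost A v k := by
  intro k
  induction k with
  | zero => intro v; simp [tpow, tId, tcost]
  | succ k ih =>
    intro v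
    calc tpow A (k+1) (v 0) (v (k+1)) ≤ A (v 0) (v 1) + tpow A k (v 1) (v (k+1)) :=
          iInf_le _ (v 1)
      _ ≤ A (v 0) (v 1) + tcost A (fun s => v (s+1)) k := add_le_add_right (ih _) _
      _ = tcost A v (k+1) := (tcost_succ' A v k).symm

lemma exists_tcost_le {N : ℕ} (hN : 0 < N) (A : Matrix (Fin N) (Fin N) ℝ≥0∞) :
    ∀ (k : ℕ) (i j : Fin N), 1 ≤ k → ∃ v : ℕ → Fin N, v 0 = i ∧ v k = j ∧
      tcost A v k ≤ tpow A k i j := by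
  intro k
  induction k with
  | zero => intro i j h; omega
  | succ k ih =>
    intro i j _
    haveI : Nonempty (Fin N) := ⟨⟨0, hN⟩⟩
    obtain ⟨m, hm⟩ := Finite.exists_min (fun m : Fin N => A i m + tpow A k m j)
    have hmin : A i m + tpow A k m j ≤ tpow A (k+1) i j := le_iInf hm
    rcases Nat.eq_zero_or_pos k with rfl | hk
    · refine ⟨fun s => if s = 0 then i else j, by simp, by simp, ?_⟩
      have h1 : tpow A 1 i j = A i j := by
        show tmul A (tId N) i j = A i j
        rw [tmul_tId]
      have : tcost A (fun s => if s = 0 then i else j) 1 = A i j := by simp [tcost]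
      rw [this, h1]
    · obtain ⟨v', hv0, hvk, hc⟩ := ih m j hk
      refine ⟨fun s => if s = 0 then i else v' (s-1), by simp, by simp [hvk], ?_⟩
      have hsplit : tcost A (fun s => if s = 0 then i else v' (s-1)) (k+1)
          = A i (v' 0) + tcost A v' k := by
        rw [tcost_succ']
        simp [tcost, hv0]
      rw [hsplit, hv0]
      exact le_trans (add_le_add_right hc _) hmin
lemma tcost_cut {N : ℕ} (A : Matrix (Fin N) (Fin N) ℝ≥0∞) (v : ℕ → Fin N) {a b k : ℕ}
    (hab : a < b) (hbk : b ≤ k) (hv : v a = v b) :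
    tcost A (fun s => if s < a then v s else v (s + (b - a))) (k - (b - a)) ≤ tcost A v k := by
  set d := b - a with hd
  set w : ℕ → Fin N := fun s => if s < a then v s else v (s + d) with hw
  have hak' : a ≤ k - d := by omega
  have hsum1 : ∑ s ∈ Finset.range a, A (w s) (w (s+1))
      = ∑ s ∈ Finset.range a, A (v s) (v (s+1)) := by
    apply Finset.sum_congr rfl
    intro s hs
    have hs' := Finset.mem_range.mp hs
    have ws : w s = v s := if_pos hs'
    have ws1 : w (s+1) = v (s+1) := by
      by_cases h : s + 1 < a
      · exact if_pos h
      · have hsa : s + 1 = a := by omega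
        have h2 : w (s+1) = v (s+1+d) := if_neg h
        rw [h2, hsa, show a + d = b by omega, ← hv]
    rw [ws, ws1]
  have hsum2 : ∑ s ∈ Finset.Ico a (k-d), A (w s) (w (s+1))
      = ∑ s ∈ Finset.Ico b k, A (v s) (v (s+1)) := by
    rw [Finset.sum_Ico_eq_sum_range, Finset.sum_Ico_eq_sum_range]
    rw [show k - d - a = k - b by omega]
    apply Finset.sum_congr rfl
    intro i _
    have e1 : w (a + i) = v (b + i) := by
      rw [hw]; simp only [if_neg (by omega : ¬ a + i < a)]
      congr 1; omega
    have e2 : w (a + i + 1) = v (b + i + 1) := by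
      rw [hw]; simp only [if_neg (by omega : ¬ a + i + 1 < a)]
      congr 1; omega
    rw [e1, e2]
  have hsplit : tcost A w (k - d) = ∑ s ∈ Finset.range a, A (w s) (w (s+1))
      + ∑ s ∈ Finset.Ico a (k-d), A (w s) (w (s+1)) := by
    rw [tcost, Finset.range_eq_Ico, ← Finset.sum_Ico_consecutive _ (Nat.zero_le a) hak',
      ← Finset.range_eq_Ico]
  have hfull : tcost A v k = (∑ s ∈ Finset.range a, A (v s) (v (s+1)))
      + ((∑ s ∈ Finset.Ico a b, A (v s) (v (s+1))) + ∑ s ∈ Finset.Ico b k, A (v s) (v (s+1))) := by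
    rw [tcost, Finset.range_eq_Ico,
      ← Finset.sum_Ico_consecutive (fun s => A (v s) (v (s+1))) (Nat.zero_le a) (le_trans hab.le hbk),
      ← Finset.sum_Ico_consecutive (fun s => A (v s) (v (s+1))) hab.le hbk,
      ← Finset.range_eq_Ico]
  rw [hsplit, hsum1, hsum2, hfull]
  exact add_le_add_right (le_add_self) _

lemma exists_repeat {N k : ℕ} (v : ℕ → Fin N) (hk : N ≤ k) :
    ∃ a b, a < b ∧ b ≤ k ∧ v a = v b := by
  obtain ⟨x, y, hxy, hvxy⟩ := Fintype.exists_ne_map_eq_of_card_lt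
    (fun s : Fin (k+1) => v s) (by simp; omega)
  rcases lt_or_gt_of_ne hxy with h | h
  · exact ⟨x, y, h, Nat.lt_succ_iff.mp y.isLt, hvxy⟩
  · exact ⟨y, x, h, Nat.lt_succ_iff.mp x.isLt, hvxy.symm⟩

lemma tpow_inf_le {N : ℕ} (hN : 0 < N) (A : Matrix (Fin N) (Fin N) ℝ≥0∞) :
    ∀ (k : ℕ) (i j : Fin N), (⨅ k' : Fin N, tpow A (k' : ℕ) i j) ≤ tpow A k i j := by
  intro k
  induction k using Nat.strong_induction_on with
  | _ k ih =>
  intro i j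
  by_cases hk : k < N
  · exact iInf_le (fun k' : Fin N => tpow A (k' : ℕ) i j) ⟨k, hk⟩
  push_neg at hk
  have hk1 : 1 ≤ k := le_trans hN hk
  obtain ⟨v, hv0, hvk, hc⟩ := exists_tcost_le hN A k i j hk1
  obtain ⟨a, b, hab, hbk, hv⟩ := exists_repeat v hk
  set d := b - a with hd
  set w : ℕ → Fin N := fun s => if s < a then v s else v (s + d) with hwdef
  have hw0 : w 0 = i := by
    by_cases h : 0 < a
    · rw [hwdef]; simp only [if_pos h]; exact hv0
    · have ha : a = 0 := by omega
      rw [hwdef]; simp only [if_neg h]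
      have : (0 : ℕ) + d = b := by omega
      rw [this, ← hv, ha, hv0]
  have hwk : w (k - d) = j := by
    rw [hwdef]; simp only [if_neg (by omega : ¬ k - d < a)]
    rw [show k - d + d = k by omega, hvk]
  have h1 : tpow A (k - d) i j ≤ tcost A w (k - d) := by
    have := tpow_le_tcost A (k - d) w
    rwa [hw0, hwk] at this
  have h2 : tcost A w (k - d) ≤ tcost A v k := tcost_cut A v hab hbk hv
  exact le_trans (ih (k - d) (by omega) i j) (le_trans h1 (le_trans h2 hc))

lemma tpow_add {N : ℕ} (A : Matrix (Fin N) (Fin N) ℝ≥0∞) (a b : ℕ) :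
    tpow A (a + b) = tmul (tpow A a) (tpow A b) := by
  induction a with
  | zero => simp [tpow, tId_tmul]
  | succ a ih =>
    rw [show a + 1 + b = (a + b) + 1 by ring]
    show tmul A (tpow A (a+b)) = tmul (tmul A (tpow A a)) (tpow A b)
    rw [ih, tmul_assoc]

lemma tmul_iInf_left {ι : Sort*} {a b c : ℕ} (f : ι → Matrix (Fin a) (Fin b) ℝ≥0∞)
    (B : Matrix (Fin b) (Fin c) ℝ≥0∞) (i : Fin a) (l : Fin c) :
    tmul (fun i j => ⨅ x, f x i j) B i l = ⨅ x, tmul (f x) B i l := by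
  show ⨅ j, ((⨅ x, f x i j) + B j l) = _
  simp only [ENNReal.iInf_add]
  rw [iInf_comm]
  rfl

lemma tmul_iInf_right {ι : Sort*} {a b c : ℕ} (A : Matrix (Fin a) (Fin b) ℝ≥0∞)
    (f : ι → Matrix (Fin b) (Fin c) ℝ≥0∞) (i : Fin a) (l : Fin c) :
    tmul A (fun i j => ⨅ x, f x i j) i l = ⨅ x, tmul A (f x) i l := by
  show ⨅ j, (A i j + ⨅ x, f x j l) = _
  simp only [ENNReal.add_iInf]
  rw [iInf_comm]
  rfl

section Main

variable {nu ny : ℕ} (tt : Matrix (Fin nu) (Fin ny) ℝ≥0∞) (p : Matrix (Fin ny) (Fin nu) ℝ≥0∞)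

noncomputable def Wm (k : ℕ) : Matrix (Fin nu) (Fin ny) ℝ≥0∞ := tmul (tpow (tmul tt p) k) tt

lemma Wm_zero : Wm tt p 0 = tt := by
  show tmul (tId nu) tt = tt
  exact tId_tmul tt

lemma Wm_add (a b : ℕ) : tmul (tmul (Wm tt p a) p) (Wm tt p b) = Wm tt p (a + b + 1) := by
  rw [Wm, Wm, Wm, show a + b + 1 = a + (b + 1) by ring, tpow_add]
  show tmul (tmul (tmul (tpow (tmul tt p) a) tt) p) (tmul (tpow (tmul tt p) b) tt)
    = tmul (tmul (tpow (tmul tt p) a) (tmul (tmul tt p) (tpow (tmul tt p) b))) tt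
  simp only [tmul_assoc]

lemma Wm_eq_right (k : ℕ) : Wm tt p k = tmul tt (tpow (tmul p tt) k) := by
  induction k with
  | zero => rw [Wm_zero]; exact (tmul_tId tt).symm
  | succ k ih =>
    show tmul (tmul (tmul tt p) (tpow (tmul tt p) k)) tt
      = tmul tt (tmul (tmul p tt) (tpow (tmul p tt) k))
    have : tmul (tpow (tmul tt p) k) tt = tmul tt (tpow (tmul p tt) k) := ih
    simp only [tmul_assoc, this]

lemma W_inf_le (hn : 1 ≤ min nu ny) (k : ℕ) (i : Fin nu) (j : Fin ny) :
    (⨅ k' : Fin (min nu ny), Wm tt p (k' : ℕ) i j) ≤ Wm tt p k i j := by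
  rcases le_total nu ny with hcase | hcase
  · have hmin : min nu ny = nu := min_eq_left hcase
    have hnu : 0 < nu := by omega
    have h1 : (⨅ k' : Fin nu, Wm tt p (k' : ℕ) i j) ≤ Wm tt p k i j := by
      have step : ∀ i', (⨅ k' : Fin nu, tpow (tmul tt p) (k' : ℕ) i i') + tt i' j
          ≤ tpow (tmul tt p) k i i' + tt i' j := fun i' =>
        add_le_add_left (tpow_inf_le hnu (tmul tt p) k i i') _
      calc (⨅ k' : Fin nu, Wm tt p (k' : ℕ) i j)
          = ⨅ k' : Fin nu, ⨅ i', (tpow (tmul tt p) (k' : ℕ) i i' + tt i' j) := rfl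
        _ = ⨅ i', ⨅ k' : Fin nu, (tpow (tmul tt p) (k' : ℕ) i i' + tt i' j) := iInf_comm
        _ = ⨅ i', ((⨅ k' : Fin nu, tpow (tmul tt p) (k' : ℕ) i i') + tt i' j) := by
            simp only [ENNReal.iInf_add]
        _ ≤ ⨅ i', (tpow (tmul tt p) k i i' + tt i' j) := iInf_mono step
        _ = Wm tt p k i j := rfl
    rw [hmin]
    exact h1
  · have hmin : min nu ny = ny := min_eq_right hcase
    have hny : 0 < ny := by omega
    have h1 : (⨅ k' : Fin ny, Wm tt p (k' : ℕ) i j) ≤ Wm tt p k i j := by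
      have step : ∀ j', tt i j' + (⨅ k' : Fin ny, tpow (tmul p tt) (k' : ℕ) j' j)
          ≤ tt i j' + tpow (tmul p tt) k j' j := fun j' =>
        add_le_add_right (tpow_inf_le hny (tmul p tt) k j' j) _
      calc (⨅ k' : Fin ny, Wm tt p (k' : ℕ) i j)
          = ⨅ k' : Fin ny, ⨅ j', (tt i j' + tpow (tmul p tt) (k' : ℕ) j' j) := by
            simp only [Wm_eq_right]; rfl
        _ = ⨅ j', ⨅ k' : Fin ny, (tt i j' + tpow (tmul p tt) (k' : ℕ) j' j) := iInf_comm
        _ = ⨅ j', (tt i j' + ⨅ k' : Fin ny, tpow (tmul p tt) (k' : ℕ) j' j) := by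
            simp only [ENNReal.add_iInf]
        _ ≤ ⨅ j', (tt i j' + tpow (tmul p tt) k j' j) := iInf_mono step
        _ = Wm tt p k i j := by rw [Wm_eq_right]; rfl
    rw [hmin]
    exact h1

end Main

section Rep

variable {nu ny : ℕ} (tt : Matrix (Fin nu) (Fin ny) ℝ≥0∞) (p : Matrix (Fin ny) (Fin nu) ℝ≥0∞)

lemma TpT_rep (m : ℕ) (hT : Tseq tt p m = fun i j => ⨅ k : Fin (2^m), Wm tt p (k : ℕ) i j)
    (i : Fin nu) (j : Fin ny) :
    tmul (tmul (Tseq tt p m) p) (Tseq tt p m) i j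
      = ⨅ a : Fin (2^m), ⨅ b : Fin (2^m), Wm tt p ((a : ℕ) + (b : ℕ) + 1) i j := by
  have h1 : tmul (Tseq tt p m) p = fun i j => ⨅ a : Fin (2^m), tmul (Wm tt p (a : ℕ)) p i j := by
    funext i' j'
    rw [hT]
    exact tmul_iInf_left _ p i' j'
  rw [h1]
  rw [tmul_iInf_left (fun a : Fin (2^m) => tmul (Wm tt p (a : ℕ)) p) (Tseq tt p m) i j]
  refine iInf_congr fun a => ?_
  conv_lhs => rw [hT]
  rw [tmul_iInf_right (tmul (Wm tt p (a : ℕ)) p) (fun b : Fin (2^m) => Wm tt p (b : ℕ)) i j]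
  refine iInf_congr fun b => ?_
  rw [Wm_add]

lemma Tseq_rep (m : ℕ) :
    Tseq tt p m = fun i j => ⨅ k : Fin (2^m), Wm tt p (k : ℕ) i j := by
  induction m with
  | zero =>
    funext i j
    show tt i j = ⨅ k : Fin 1, Wm tt p (k : ℕ) i j
    rw [iInf_unique]
    show tt i j = Wm tt p ((default : Fin 1) : ℕ) i j
    rw [show ((default : Fin 1) : ℕ) = 0 from rfl, Wm_zero]
  | succ m ih =>
    funext i j
    show min (Tseq tt p m i j) (tmul (tmul (Tseq tt p m) p) (Tseq tt p m) i j) = _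
    rw [TpT_rep tt p m ih i j]
    have hTm : Tseq tt p m i j = ⨅ k : Fin (2^m), Wm tt p (k : ℕ) i j := by rw [ih]
    rw [hTm]
    have h2m : (2:ℕ)^m ≤ 2^(m+1) := Nat.pow_le_pow_right (by norm_num) (by omega)
    have hpos : 0 < (2:ℕ)^m := Nat.pow_pos (by norm_num)
    apply le_antisymm
    · refine le_iInf fun k => ?_
      by_cases hk : (k : ℕ) < 2^m
      · exact min_le_left _ _ |>.trans (iInf_le _ (⟨k, hk⟩ : Fin (2^m)))
      · push_neg at hk
        have hk2 : (k : ℕ) < 2^(m+1) := k.isLt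
        have ha : (2:ℕ)^m - 1 < 2^m := by omega
        have hb : (k : ℕ) - 2^m < 2^m := by
          have : (2:ℕ)^(m+1) = 2^m + 2^m := by rw [pow_succ]; ring
          omega
        have heq : ((2:ℕ)^m - 1) + ((k : ℕ) - 2^m) + 1 = (k : ℕ) := by omega
        refine min_le_right _ _ |>.trans ?_
        refine (iInf_le _ (⟨2^m - 1, ha⟩ : Fin (2^m))).trans ?_
        refine (iInf_le _ (⟨(k : ℕ) - 2^m, hb⟩ : Fin (2^m))).trans ?_
        rw [show ((⟨2^m - 1, ha⟩ : Fin (2^m)) : ℕ) + ((⟨(k : ℕ) - 2^m, hb⟩ : Fin (2^m)) : ℕ) + 1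
          = (k : ℕ) from heq]
    · refine le_min ?_ ?_
      · exact le_iInf fun k => iInf_le _ (⟨(k : ℕ), lt_of_lt_of_le k.isLt h2m⟩ : Fin (2^(m+1)))
      · refine le_iInf fun a => le_iInf fun b => ?_
        have hab : (a : ℕ) + (b : ℕ) + 1 < 2^(m+1) := by
          have ha := a.isLt; have hb := b.isLt
          have : (2:ℕ)^(m+1) = 2^m + 2^m := by rw [pow_succ]; ring
          omega
        exact iInf_le _ (⟨(a : ℕ) + (b : ℕ) + 1, hab⟩ : Fin (2^(m+1)))

end Rep


lemma tmul_le {a b c : ℕ} {A A' : Matrix (Fin a) (Fin b) ℝ≥0∞} {B B' : Matrix (Fin b) (Fin c) ℝ≥0∞}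
    (hA : ∀ i j, A i j ≤ A' i j) (hB : ∀ i j, B i j ≤ B' i j) (i : Fin a) (l : Fin c) :
    tmul A B i l ≤ tmul A' B' i l :=
  iInf_mono fun x => add_le_add (hA _ _) (hB _ _)

theorem stmt17 {nu ny : ℕ} (hn : 1 ≤ min nu ny)
    (tt : Matrix (Fin nu) (Fin ny) ℝ≥0∞) (p : Matrix (Fin ny) (Fin nu) ℝ≥0∞) :
    (∀ (m : ℕ) (i : Fin nu) (j : Fin ny), Tseq tt p (m + 1) i j ≤ Tseq tt p m i j) ∧
    (∀ (m : ℕ) (i : Fin nu) (j : Fin ny), Tseq tt p m i j ≤ tt i j) ∧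
    (∀ m : ℕ, Nat.clog 2 (min nu ny) ≤ m →
      Tseq tt p m = Tseq tt p (m + 1) ∧
      (∀ i j, Tseq tt p m i j ≤ tmul (tmul (Tseq tt p m) p) (Tseq tt p m) i j) ∧
      (∀ T : Matrix (Fin nu) (Fin ny) ℝ≥0∞,
        (∀ i j, T i j ≤ tt i j) → (∀ i j, T i j ≤ tmul (tmul T p) T i j) →
        ∀ i j, T i j ≤ Tseq tt p m i j)) := by
  have hmono : ∀ (m : ℕ) (i : Fin nu) (j : Fin ny), Tseq tt p (m + 1) i j ≤ Tseq tt p m i j :=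
    fun m i j => min_le_left _ _
  have hle_tt : ∀ (m : ℕ) (i : Fin nu) (j : Fin ny), Tseq tt p m i j ≤ tt i j := by
    intro m
    induction m with
    | zero => intro i j; exact le_rfl
    | succ m ih => intro i j; exact (hmono m i j).trans (ih i j)
  have hmax : ∀ (T : Matrix (Fin nu) (Fin ny) ℝ≥0∞),
      (∀ i j, T i j ≤ tt i j) → (∀ i j, T i j ≤ tmul (tmul T p) T i j) →
      ∀ (m : ℕ) (i : Fin nu) (j : Fin ny), T i j ≤ Tseq tt p m i j := by
    intro T hT1 hT2 m
    induction m with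
    | zero => exact hT1
    | succ m ih =>
      intro i j
      show T i j ≤ min (Tseq tt p m i j) (tmul (tmul (Tseq tt p m) p) (Tseq tt p m) i j)
      refine le_min (ih i j) ((hT2 i j).trans ?_)
      exact tmul_le (fun i' j' => tmul_le ih (fun _ _ => le_rfl) i' j') ih i j
  refine ⟨hmono, hle_tt, fun m hm => ?_⟩
  have hn2m : min nu ny ≤ 2 ^ m :=
    (Nat.le_pow_clog (by norm_num) _).trans (Nat.pow_le_pow_right (by norm_num) hm)
  have key : ∀ (k : ℕ) (i : Fin nu) (j : Fin ny), Tseq tt p m i j ≤ Wm tt p k i j := by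
    intro k i j
    have h1 : Tseq tt p m i j = ⨅ k' : Fin (2^m), Wm tt p (k' : ℕ) i j := by
      rw [Tseq_rep]
    rw [h1]
    refine le_trans ?_ (W_inf_le tt p hn k i j)
    exact le_iInf fun k' => iInf_le _ (⟨(k' : ℕ), lt_of_lt_of_le k'.isLt hn2m⟩ : Fin (2^m))
  have hfix : Tseq tt p m = Tseq tt p (m + 1) := by
    funext i j
    rw [Tseq_rep tt p m, Tseq_rep tt p (m+1)]
    refine le_antisymm (le_iInf fun k => ?_) (le_iInf fun k => ?_)
    · have := key (k : ℕ) i j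
      rwa [Tseq_rep tt p m] at this
    · have h2m : (2:ℕ)^m ≤ 2^(m+1) := Nat.pow_le_pow_right (by norm_num) (by omega)
      exact iInf_le _ (⟨(k : ℕ), lt_of_lt_of_le k.isLt h2m⟩ : Fin (2^(m+1)))
  refine ⟨hfix, fun i j => ?_, fun T hT1 hT2 i j => hmax T hT1 hT2 m i j⟩
  calc Tseq tt p m i j = Tseq tt p (m+1) i j := by rw [hfix]
    _ = min (Tseq tt p m i j) (tmul (tmul (Tseq tt p m) p) (Tseq tt p m) i j) := rfl
    _ ≤ _ := min_le_right _ _
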